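/- arXiv:1304.0781 — 2 statements merged into one kernel-verified Lean document; each statement's English description precedes it below -/
import Mathlib

section
/- If Z = x₁ + y₂·ij is a hyperbolic number (x₁, y₂ ∈ ℝ) and U = u₁ + u₂j is any bicomplex number, then |Z·U|² = |Z|²·|U|² + 4x₁y₂·Re(i·u₁·conj(u₂)). -/
@[ext] structure BC where
  z1 : ℂ
  z2 : ℂ

namespace BC

instance : Zero BC := ⟨⟨0, 0⟩⟩
instance : One BC := ⟨⟨1, 0⟩⟩
instance : Add BC := ⟨fun Z W => ⟨Z.z1 + W.z1, Z.z2 + W.z2⟩⟩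
instance : Neg BC := ⟨fun Z => ⟨-Z.z1, -Z.z2⟩⟩
instance : Mul BC := ⟨fun Z W => ⟨Z.z1 * W.z1 - Z.z2 * W.z2, Z.z1 * W.z2 + Z.z2 * W.z1⟩⟩

@[simp] lemma zero_z1 : (0 : BC).z1 = 0 := rfl
@[simp] lemma zero_z2 : (0 : BC).z2 = 0 := rfl
@[simp] lemma one_z1 : (1 : BC).z1 = 1 := rfl
@[simp] lemma one_z2 : (1 : BC).z2 = 0 := rfl
@[simp] lemma add_z1 (Z W : BC) : (Z + W).z1 = Z.z1 + W.z1 := rfl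
@[simp] lemma add_z2 (Z W : BC) : (Z + W).z2 = Z.z2 + W.z2 := rfl
@[simp] lemma neg_z1 (Z : BC) : (-Z).z1 = -Z.z1 := rfl
@[simp] lemma neg_z2 (Z : BC) : (-Z).z2 = -Z.z2 := rfl
@[simp] lemma mul_z1 (Z W : BC) : (Z * W).z1 = Z.z1 * W.z1 - Z.z2 * W.z2 := rfl
@[simp] lemma mul_z2 (Z W : BC) : (Z * W).z2 = Z.z1 * W.z2 + Z.z2 * W.z1 := rfl

instance : CommRing BC where
  add_assoc a b c := by ext <;> simp <;> ring
  zero_add a := by ext <;> simp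
  add_zero a := by ext <;> simp
  add_comm a b := by ext <;> simp <;> ring
  neg_add_cancel a := by ext <;> simp
  mul_assoc a b c := by ext <;> simp <;> ring
  one_mul a := by ext <;> simp
  mul_one a := by ext <;> simp
  left_distrib a b c := by ext <;> simp <;> ring
  right_distrib a b c := by ext <;> simp <;> ring
  mul_comm a b := by ext <;> simp <;> ring
  zero_mul a := by ext <;> simp
  mul_zero a := by ext <;> simp
  nsmul := nsmulRec
  zsmul := zsmulRec

/-- Euclidean norm of a bicomplex number. -/
noncomputable def enorm (Z : BC) : ℝ :=
  Real.sqrt (‖Z.z1‖ ^ 2 + ‖Z.z2‖ ^ 2)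

/-- Embedding of ℂ(𝐢) into BC. -/
def ofC (z : ℂ) : BC := ⟨z, 0⟩

/-- Embedding of ℝ into BC. -/
noncomputable def ofR (r : ℝ) : BC := ⟨(r : ℂ), 0⟩

/-- The idempotent 𝐞 = (1 + 𝐢𝐣)/2. -/
noncomputable def e : BC := ⟨1 / 2, Complex.I / 2⟩

/-- The idempotent 𝐞† = (1 - 𝐢𝐣)/2. -/
noncomputable def edag : BC := ⟨1 / 2, -(Complex.I / 2)⟩

/-- First idempotent component β₁ = z₁ - 𝐢 z₂. -/
def beta1 (Z : BC) : ℂ := Z.z1 - Complex.I * Z.z2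

/-- Second idempotent component β₂ = z₁ + 𝐢 z₂. -/
def beta2 (Z : BC) : ℂ := Z.z1 + Complex.I * Z.z2

/-- The †-conjugation. -/
def dag (Z : BC) : BC := ⟨Z.z1, -Z.z2⟩

/-- The *-conjugation. -/
def bstar (Z : BC) : BC := ⟨(starRingEnd ℂ) Z.z1, -((starRingEnd ℂ) Z.z2)⟩

/-- The set 𝔻⁺ of positive hyperbolic numbers. -/
def Dpos : Set BC :=
  {Z | ∃ ν μ : ℝ, 0 ≤ ν ∧ 0 ≤ μ ∧ Z = ofR ν * e + ofR μ * edag}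

/-- Partial order induced by 𝔻⁺. -/
def hle (Z W : BC) : Prop := W - Z ∈ Dpos

/-- Hyperbolic-valued norm |Z|ₖ = |β₁|𝐞 + |β₂|𝐞†. -/
noncomputable def hnorm (Z : BC) : BC :=
  ofR ‖beta1 Z‖ * e + ofR ‖beta2 Z‖ * edag

/-- Z is a hyperbolic number: Z = x₁ + y₂ 𝐢𝐣. -/
def isHyp (Z : BC) : Prop := Z.z1.im = 0 ∧ Z.z2.re = 0


theorem euclidean_norm_mul_of_hyperbolic (x₁ y₂ : ℝ) (U : BC) :
    enorm ((⟨(x₁ : ℂ), (y₂ : ℂ) * Complex.I⟩ : BC) * U) ^ 2 =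
      enorm (⟨(x₁ : ℂ), (y₂ : ℂ) * Complex.I⟩ : BC) ^ 2 * enorm U ^ 2 +
        4 * x₁ * y₂ * (Complex.I * U.z1 * (starRingEnd ℂ) U.z2).re := by
  obtain ⟨u₁, u₂⟩ := U
  simp only [enorm, mul_z1, mul_z2]
  rw [Real.sq_sqrt (by positivity), Real.sq_sqrt (by positivity), Real.sq_sqrt (by positivity)]
  simp only [Complex.sq_norm, Complex.normSq_apply, Complex.sub_re, Complex.sub_im,
    Complex.add_re, Complex.add_im, Complex.mul_re, Complex.mul_im, Complex.I_re,
    Complex.I_im, Complex.ofReal_re, Complex.ofReal_im, Complex.conj_re, Complex.conj_im]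
  ring

end BC
end

section
/- Let A = A₁ + jA₂ = 𝒜₁e + 𝒜₂e† be a bicomplex n×n matrix that is *-self-adjoint. Then the following are equivalent: (a) c^{*t}·A·c ∈ 𝔻⁺ for every column c ∈ BC^n (A is hyperbolic positive); (b) both complex matrices 𝒜₁ = A₁ - iA₂ and 𝒜₂ = A₁ + iA₂ are positive semidefinite; (c) A₁ ≥ 0, A₂ is skew self-adjoint, and -A₁ ≤ iA₂ ≤ A₁. -/
namespace BC

/-- Bicomplex matrix from its idempotent components. -/
noncomputable def idemMat {n : ℕ} (A1 A2 : Matrix (Fin n) (Fin n) ℂ) :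
    Matrix (Fin n) (Fin n) BC :=
  fun i j => ofC (A1 i j) * e + ofC (A2 i j) * edag

/-- The *-conjugate transpose of a bicomplex matrix. -/
def cstar {m n : ℕ} (A : Matrix (Fin m) (Fin n) BC) : Matrix (Fin n) (Fin m) BC :=
  fun i j => bstar (A j i)

/-- The quadratic form c^{*t} · A · c. -/
def quadForm {n : ℕ} (A : Matrix (Fin n) (Fin n) BC) (c : Fin n → BC) : BC :=
  ∑ i, ∑ j, bstar (c i) * A i j * c j

/-- A is hyperbolic positive: *-self-adjoint with c^{*t}Ac ∈ 𝔻⁺ for all columns c. -/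
def HypPos {n : ℕ} (A : Matrix (Fin n) (Fin n) BC) : Prop :=
  cstar A = A ∧ ∀ c : Fin n → BC, quadForm A c ∈ Dpos

section Aux

open scoped ComplexOrder

/-- β₁ as a ring homomorphism. -/
def beta1Hom : BC →+* ℂ where
  toFun := beta1
  map_one' := by simp [beta1]
  map_mul' Z W := by
    simp [beta1]
    linear_combination (-(Z.z2 * W.z2)) * Complex.I_mul_I
  map_zero' := by simp [beta1]
  map_add' Z W := by simp [beta1]; ring

/-- β₂ as a ring homomorphism. -/
def beta2Hom : BC →+* ℂ where
  toFun := beta2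
  map_one' := by simp [beta2]
  map_mul' Z W := by
    simp [beta2]
    linear_combination (-(Z.z2 * W.z2)) * Complex.I_mul_I
  map_zero' := by simp [beta2]
  map_add' Z W := by simp [beta2]; ring

lemma beta1_mul (Z W : BC) : beta1 (Z * W) = beta1 Z * beta1 W := map_mul beta1Hom Z W
lemma beta2_mul (Z W : BC) : beta2 (Z * W) = beta2 Z * beta2 W := map_mul beta2Hom Z W

lemma beta1_sum {ι : Type*} (s : Finset ι) (f : ι → BC) :
    beta1 (∑ i ∈ s, f i) = ∑ i ∈ s, beta1 (f i) := map_sum beta1Hom f s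

lemma beta2_sum {ι : Type*} (s : Finset ι) (f : ι → BC) :
    beta2 (∑ i ∈ s, f i) = ∑ i ∈ s, beta2 (f i) := map_sum beta2Hom f s

lemma beta1_bstar (Z : BC) : beta1 (bstar Z) = (starRingEnd ℂ) (beta1 Z) := by
  simp [beta1, bstar, map_sub, map_mul, Complex.conj_I]

lemma beta2_bstar (Z : BC) : beta2 (bstar Z) = (starRingEnd ℂ) (beta2 Z) := by
  simp [beta2, bstar, map_add, map_mul, Complex.conj_I]

lemma mem_Dpos_iff (Z : BC) : Z ∈ Dpos ↔ 0 ≤ beta1 Z ∧ 0 ≤ beta2 Z := by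
  constructor
  · rintro ⟨ν, μ, hν, hμ, rfl⟩
    have h1 : beta1 (ofR ν * e + ofR μ * edag) = (ν : ℂ) := by
      simp [beta1, ofR, e, edag]
      linear_combination (((μ : ℂ) - ν) / 2) * Complex.I_mul_I
    have h2 : beta2 (ofR ν * e + ofR μ * edag) = (μ : ℂ) := by
      simp [beta2, ofR, e, edag]
      linear_combination (((ν : ℂ) - μ) / 2) * Complex.I_mul_I
    rw [h1, h2]
    exact ⟨by rwa [Complex.zero_le_real], by rwa [Complex.zero_le_real]⟩
  · rintro ⟨h1, h2⟩
    refine ⟨(beta1 Z).re, (beta2 Z).re, ?_, ?_, ?_⟩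
    · exact (Complex.le_def.1 h1).1
    · exact (Complex.le_def.1 h2).1
    · have e1 : beta1 Z = ((beta1 Z).re : ℂ) := by
        apply Complex.ext <;> simp [← (Complex.le_def.1 h1).2]
      have e2 : beta2 Z = ((beta2 Z).re : ℂ) := by
        apply Complex.ext <;> simp [← (Complex.le_def.1 h2).2]
      have hb1 : Z.z1 - Complex.I * Z.z2 = ((beta1 Z).re : ℂ) := e1
      have hb2 : Z.z1 + Complex.I * Z.z2 = ((beta2 Z).re : ℂ) := e2
      ext
      · simp [ofR, e, edag]
        linear_combination hb1 / 2 + hb2 / 2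
      · simp [ofR, e, edag]
        linear_combination (-Complex.I / 2) * (hb2 - hb1) + Z.z2 * Complex.I_mul_I

lemma beta1_quadForm {n : ℕ} (A : Matrix (Fin n) (Fin n) BC) (c : Fin n → BC) :
    beta1 (quadForm A c) =
      ∑ i, ∑ j, (starRingEnd ℂ) (beta1 (c i)) * beta1 (A i j) * beta1 (c j) := by
  simp only [quadForm, beta1_sum, beta1_mul, beta1_bstar]

lemma beta2_quadForm {n : ℕ} (A : Matrix (Fin n) (Fin n) BC) (c : Fin n → BC) :
    beta2 (quadForm A c) =
      ∑ i, ∑ j, (starRingEnd ℂ) (beta2 (c i)) * beta2 (A i j) * beta2 (c j) := by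
  simp only [quadForm, beta2_sum, beta2_mul, beta2_bstar]

lemma lift_exists {n : ℕ} (x y : Fin n → ℂ) :
    ∃ c : Fin n → BC, (∀ i, beta1 (c i) = x i) ∧ (∀ i, beta2 (c i) = y i) := by
  refine ⟨fun i => ⟨(x i + y i) / 2, Complex.I * (x i - y i) / 2⟩, fun i => ?_, fun i => ?_⟩
  · simp only [beta1]
    linear_combination ((y i - x i) / 2) * Complex.I_mul_I
  · simp only [beta2]
    linear_combination ((x i - y i) / 2) * Complex.I_mul_I

lemma dot_expand {n : ℕ} (M : Matrix (Fin n) (Fin n) ℂ) (x : Fin n → ℂ) :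
    dotProduct (star x) (M.mulVec x) =
      ∑ i, ∑ j, (starRingEnd ℂ) (x i) * M i j * x j := by
  simp [dotProduct, Matrix.mulVec, Finset.mul_sum, mul_assoc, Complex.star_def]

end Aux

open scoped ComplexOrder in
theorem hyperbolic_positive_tfae (n : ℕ) (A1 A2 : Matrix (Fin n) (Fin n) ℂ)
    (A : Matrix (Fin n) (Fin n) BC)
    (hA : A = fun i j => (⟨A1 i j, A2 i j⟩ : BC))
    (hsa : cstar A = A) :
    ((∀ c : Fin n → BC, quadForm A c ∈ Dpos) ↔
      (Matrix.PosSemidef (A1 - Complex.I • A2) ∧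
        Matrix.PosSemidef (A1 + Complex.I • A2))) ∧
    ((∀ c : Fin n → BC, quadForm A c ∈ Dpos) ↔
      (Matrix.PosSemidef A1 ∧ A2.conjTranspose = -A2 ∧
        Matrix.PosSemidef (A1 + Complex.I • A2) ∧
        Matrix.PosSemidef (A1 - Complex.I • A2))) := by
  subst hA
  -- entrywise consequences of *-self-adjointness
  have hent : ∀ i j, (starRingEnd ℂ) (A1 j i) = A1 i j ∧ -(starRingEnd ℂ) (A2 j i) = A2 i j := by
    intro i j
    have h := congrFun (congrFun hsa i) j
    simpa [cstar, bstar, BC.ext_iff] using h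
  have hA1c : ∀ i j, (starRingEnd ℂ) (A1 j i) = A1 i j := fun i j => (hent i j).1
  have hA2c : ∀ i j, -(starRingEnd ℂ) (A2 j i) = A2 i j := fun i j => (hent i j).2
  set M1 := A1 - Complex.I • A2 with hM1
  set M2 := A1 + Complex.I • A2 with hM2
  have hM1e : ∀ i j, M1 i j = A1 i j - Complex.I * A2 i j := by
    intro i j; simp [hM1, Matrix.sub_apply, Matrix.smul_apply]
  have hM2e : ∀ i j, M2 i j = A1 i j + Complex.I * A2 i j := by
    intro i j; simp [hM2, Matrix.add_apply, Matrix.smul_apply]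
  have hb1A : ∀ i j, beta1 ((⟨A1 i j, A2 i j⟩ : BC)) = M1 i j := by
    intro i j; rw [hM1e]; rfl
  have hb2A : ∀ i j, beta2 ((⟨A1 i j, A2 i j⟩ : BC)) = M2 i j := by
    intro i j; rw [hM2e]; rfl
  have herm1 : M1.IsHermitian := by
    ext i j
    rw [Matrix.conjTranspose_apply, hM1e, hM1e, Complex.star_def, map_sub, map_mul,
      Complex.conj_I]
    linear_combination hA1c i j - Complex.I * hA2c i j
  have herm2 : M2.IsHermitian := by
    ext i j
    rw [Matrix.conjTranspose_apply, hM2e, hM2e, Complex.star_def, map_add, map_mul,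
      Complex.conj_I]
    linear_combination hA1c i j + Complex.I * hA2c i j
  have hmain : (∀ c : Fin n → BC, quadForm (fun i j => (⟨A1 i j, A2 i j⟩ : BC)) c ∈ Dpos) ↔
      (Matrix.PosSemidef M1 ∧ Matrix.PosSemidef M2) := by
    constructor
    · intro h
      constructor
      · refine .of_dotProduct_mulVec_nonneg herm1 fun x => ?_
        obtain ⟨c, hc1, _⟩ := lift_exists x x
        have hq := ((mem_Dpos_iff _).1 (h c)).1
        erw [beta1_quadForm] at hq
        rw [dot_expand]
        have heq : ∀ i j : Fin n, (starRingEnd ℂ) (beta1 (c i)) *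
            beta1 ((⟨A1 i j, A2 i j⟩ : BC)) * beta1 (c j) =
            (starRingEnd ℂ) (x i) * M1 i j * x j := by
          intro i j; rw [hc1, hc1, hb1A]
        simp only [heq] at hq
        exact hq
      · refine .of_dotProduct_mulVec_nonneg herm2 fun x => ?_
        obtain ⟨c, _, hc2⟩ := lift_exists x x
        have hq := ((mem_Dpos_iff _).1 (h c)).2
        erw [beta2_quadForm] at hq
        rw [dot_expand]
        have heq : ∀ i j : Fin n, (starRingEnd ℂ) (beta2 (c i)) *
            beta2 ((⟨A1 i j, A2 i j⟩ : BC)) * beta2 (c j) =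
            (starRingEnd ℂ) (x i) * M2 i j * x j := by
          intro i j; rw [hc2, hc2, hb2A]
        simp only [heq] at hq
        exact hq
    · rintro ⟨h1, h2⟩ c
      rw [mem_Dpos_iff]
      constructor
      · have := h1.dotProduct_mulVec_nonneg (fun i => beta1 (c i))
        rw [dot_expand] at this
        erw [beta1_quadForm]
        simp only [hb1A]
        exact this
      · have := h2.dotProduct_mulVec_nonneg (fun i => beta2 (c i))
        rw [dot_expand] at this
        erw [beta2_quadForm]
        simp only [hb2A]
        exact this
  refine ⟨hmain, hmain.trans ⟨?_, ?_⟩⟩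
  · rintro ⟨p1, p2⟩
    refine ⟨.of_dotProduct_mulVec_nonneg ?_ fun x => ?_, ?_, p2, p1⟩
    · ext i j
      rw [Matrix.conjTranspose_apply, Complex.star_def]
      exact hA1c i j
    · have e1 := p1.dotProduct_mulVec_nonneg x
      have e2 := p2.dotProduct_mulVec_nonneg x
      have hsum : dotProduct (star x) (M1.mulVec x) +
          dotProduct (star x) (M2.mulVec x) =
          dotProduct (star x) (A1.mulVec x) +
          dotProduct (star x) (A1.mulVec x) := by
        rw [← dotProduct_add, ← Matrix.add_mulVec, ← dotProduct_add,
          ← Matrix.add_mulVec]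
        congr 2
        have hMM : (A1 - Complex.I • A2) + (A1 + Complex.I • A2) = A1 + A1 := by
          ext i j
          simp only [Matrix.add_apply, Matrix.sub_apply, Matrix.smul_apply, smul_eq_mul]
          ring
        rw [hM1, hM2, hMM]
      have hpos : 0 ≤ dotProduct (star x) (A1.mulVec x) +
          dotProduct (star x) (A1.mulVec x) := hsum ▸ add_nonneg e1 e2
      have hhalf : dotProduct (star x) (A1.mulVec x) =
          (2⁻¹ : ℂ) * (dotProduct (star x) (A1.mulVec x) +
            dotProduct (star x) (A1.mulVec x)) := by ring
      rw [hhalf]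
      have h2inv : (0 : ℂ) ≤ (2⁻¹ : ℂ) := by
        rw [Complex.le_def]; norm_num
      exact mul_nonneg h2inv hpos
    · ext i j
      rw [Matrix.conjTranspose_apply, Matrix.neg_apply, Complex.star_def]
      linear_combination -(hA2c i j)
  · rintro ⟨_, _, p2, p1⟩
    exact ⟨p1, p2⟩

end BC
end
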